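/- Define Ω̃(μ) as the multiplicative convolution e⁻¹ ⊛ μ, where e is the exponential distribution and e⁻¹ its pushforward under x ↦ 1/x. Then Ω̃(μ)([0,t]) = ∫_{(0,∞)} e^{-x/t} dμ(x) = exp(C_μ(-1/t)) for t > 0, and Ω̃ is a homomorphism from (P(ℝ₊), ∗) to (P(ℝ₊), ∨): Ω̃(μ∗ν)([0,t]) = Ω̃(μ)([0,t])·Ω̃(ν)([0,t]) for all t ≥ 0. -/

import Mathlib

open MeasureTheory Set Filter Real

/-- The exponential distribution with density `e^{-x}` on `(0,∞)`. -/
noncomputable def expDist : Measure ℝ :=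
  (volume.restrict (Set.Ioi 0)).withDensity fun x => ENNReal.ofReal (Real.exp (-x))

/-- Multiplicative convolution: the law of a product of independent random variables. -/
noncomputable def multConv (μ ν : Measure ℝ) : Measure ℝ :=
  Measure.map (fun p : ℝ × ℝ => p.1 * p.2) (μ.prod ν)

/-- Additive convolution. -/
noncomputable def addConv (μ ν : Measure ℝ) : Measure ℝ :=
  Measure.map (fun p : ℝ × ℝ => p.1 + p.2) (μ.prod ν)

/-- `Ω̃(μ) := e⁻¹ ⊛ μ`, the multiplicative convolution of the reciprocal of the
exponential distribution with `μ`. -/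
noncomputable def omegaTilde (μ : Measure ℝ) : Measure ℝ :=
  multConv (Measure.map (fun x : ℝ => x⁻¹) expDist) μ

noncomputable def ftAux (t x : ℝ) : ℝ :=
  if 0 < t then Real.exp (-x / t) else if x = 0 then 1 else 0

lemma ftAux_nonneg (t x : ℝ) : 0 ≤ ftAux t x := by
  unfold ftAux; split_ifs <;> positivity

lemma ftAux_le_one {t x : ℝ} (hx : 0 ≤ x) : ftAux t x ≤ 1 := by
  unfold ftAux
  split_ifs with h
  · rw [show (1:ℝ) = Real.exp 0 by simp]
    exact Real.exp_le_exp.mpr (by rw [neg_div]; simpa using div_nonneg hx h.le)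
  · norm_num
  · norm_num

lemma measurable_ftAux (t : ℝ) : Measurable (ftAux t) := by
  unfold ftAux
  split_ifs with h
  · exact Continuous.measurable (by fun_prop)
  · exact Measurable.ite (measurableSet_eq) measurable_const measurable_const

lemma ftAux_mul {t x y : ℝ} (hx : 0 ≤ x) (hy : 0 ≤ y) :
    ftAux t (x + y) = ftAux t x * ftAux t y := by
  unfold ftAux
  by_cases h : 0 < t
  · simp only [if_pos h]
    rw [neg_div, add_div, neg_add, Real.exp_add, neg_div, neg_div]
  · simp only [if_neg h]
    by_cases hx0 : x = 0 <;> by_cases hy0 : y = 0 <;> simp [hx0, hy0]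
    have hxp : 0 < x := lt_of_le_of_ne hx (Ne.symm hx0)
    have hyp : 0 < y := lt_of_le_of_ne hy (Ne.symm hy0)
    have : x + y ≠ 0 := by positivity
    simp [this]

lemma expDist_apply {A : Set ℝ} (hA : MeasurableSet A) :
    expDist A = ∫⁻ x in A ∩ Set.Ioi 0, ENNReal.ofReal (Real.exp (-x)) := by
  rw [expDist, withDensity_apply _ hA, Measure.restrict_restrict hA]

lemma lintegral_exp_Ici (a : ℝ) :
    ∫⁻ x in Set.Ici a, ENNReal.ofReal (Real.exp (-x)) = ENNReal.ofReal (Real.exp (-a)) := by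
  have hint : IntegrableOn (fun x : ℝ => Real.exp (-x)) (Set.Ici a) := by
    rw [integrableOn_Ici_iff_integrableOn_Ioi]
    simpa using exp_neg_integrableOn_Ioi a (b := 1) one_pos
  rw [← ofReal_integral_eq_lintegral_ofReal hint
    (Filter.Eventually.of_forall fun x => (Real.exp_pos _).le),
    MeasureTheory.integral_Ici_eq_integral_Ioi, integral_exp_neg_Ioi]

lemma expDist_univ : expDist Set.univ = 1 := by
  rw [expDist_apply MeasurableSet.univ, Set.univ_inter]
  rw [show (volume : Measure ℝ).restrict (Set.Ioi 0) = volume.restrict (Set.Ici 0) from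
    MeasureTheory.restrict_Ioi_eq_restrict_Ici, lintegral_exp_Ici]
  simp

instance : IsProbabilityMeasure expDist := ⟨expDist_univ⟩

/-- The reciprocal exponential distribution. -/
noncomputable def rhoDist : Measure ℝ := Measure.map (fun x : ℝ => x⁻¹) expDist

instance : IsProbabilityMeasure rhoDist :=
  Measure.isProbabilityMeasure_map measurable_inv.aemeasurable

lemma rhoDist_Iic_pos {s : ℝ} (hs : 0 < s) :
    rhoDist (Set.Iic s) = ENNReal.ofReal (Real.exp (-s⁻¹)) := by
  rw [rhoDist, Measure.map_apply measurable_inv measurableSet_Iic,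
    expDist_apply (measurable_inv measurableSet_Iic)]
  have hset : (fun x : ℝ => x⁻¹) ⁻¹' Set.Iic s ∩ Set.Ioi 0 = Set.Ici s⁻¹ := by
    ext x
    simp only [Set.mem_inter_iff, Set.mem_preimage, Set.mem_Iic, Set.mem_Ioi, Set.mem_Ici]
    constructor
    · rintro ⟨h1, h2⟩
      exact (inv_le_comm₀ h2 hs).mp h1
    · intro h
      have hx : 0 < x := lt_of_lt_of_le (inv_pos.mpr hs) h
      exact ⟨(inv_le_comm₀ hx hs).mpr h, hx⟩
  rw [hset, lintegral_exp_Ici]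

lemma rhoDist_Iic_nonpos {s : ℝ} (hs : s ≤ 0) : rhoDist (Set.Iic s) = 0 := by
  rw [rhoDist, Measure.map_apply measurable_inv measurableSet_Iic,
    expDist_apply (measurable_inv measurableSet_Iic)]
  have hset : (fun x : ℝ => x⁻¹) ⁻¹' Set.Iic s ∩ Set.Ioi 0 = ∅ := by
    ext x
    simp only [Set.mem_inter_iff, Set.mem_preimage, Set.mem_Iic, Set.mem_Ioi, Set.mem_empty_iff_false,
      iff_false, not_and]
    intro h1 h2
    exact absurd (lt_of_lt_of_le (inv_pos.mpr h2) (h1.trans hs)) (lt_irrefl 0)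
  rw [hset]; simp

lemma ae_nonneg_of_Iio_zero {σ : Measure ℝ} (h : σ (Set.Iio 0) = 0) : ∀ᵐ x ∂σ, 0 ≤ x := by
  rw [MeasureTheory.ae_iff]
  convert h using 2
  ext x; simp

/-- The key set computation: measure of `{y | y * x ≤ t}` under `rhoDist`. -/
lemma rhoDist_section {t x : ℝ} (ht : 0 ≤ t) (hx : 0 ≤ x) :
    rhoDist {y : ℝ | y * x ≤ t} = ENNReal.ofReal (ftAux t x) := by
  rcases eq_or_lt_of_le hx with hx0 | hx0
  · have : {y : ℝ | y * x ≤ t} = Set.univ := by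
      ext y; simp [← hx0, ht]
    rw [this, ← hx0]
    have h1 : ftAux t 0 = 1 := by
      unfold ftAux; split_ifs with h h2
      · simp
      · rfl
      · exact absurd rfl h2
    simp [h1]
  · have hset : {y : ℝ | y * x ≤ t} = Set.Iic (t / x) := by
      ext y; simp [Set.mem_Iic, le_div_iff₀ hx0]
    rw [hset]
    rcases eq_or_lt_of_le ht with ht0 | ht0
    · rw [rhoDist_Iic_nonpos (by rw [← ht0]; simp)]
      unfold ftAux
      rw [if_neg (by rw [← ht0]; exact lt_irrefl 0), if_neg (Ne.symm (ne_of_lt hx0))]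
      simp
    · rw [rhoDist_Iic_pos (div_pos ht0 hx0)]
      unfold ftAux
      rw [if_pos ht0]
      congr 1
      rw [neg_div]
      congr 1
      rw [inv_div]

noncomputable def omegaTilde' (μ : Measure ℝ) : Measure ℝ :=
  Measure.map (fun p : ℝ × ℝ => p.1 * p.2) ((Measure.map (fun x : ℝ => x⁻¹) expDist).prod μ)

lemma omegaTilde_lintegral (σ : Measure ℝ) [IsProbabilityMeasure σ] (hσ : σ (Set.Iio 0) = 0)
    {t : ℝ} (ht : 0 ≤ t) :
    omegaTilde' σ (Set.Iic t) = ∫⁻ x, ENNReal.ofReal (ftAux t x) ∂σ := by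
  rw [omegaTilde',
    Measure.map_apply (show Measurable fun p : ℝ × ℝ => p.1 * p.2 from measurable_fst.mul measurable_snd) measurableSet_Iic,
    Measure.prod_apply_symm ((show Measurable fun p : ℝ × ℝ => p.1 * p.2 from measurable_fst.mul measurable_snd) measurableSet_Iic)]
  refine lintegral_congr_ae ?_
  filter_upwards [ae_nonneg_of_Iio_zero hσ] with x hx
  have hset : ((fun y : ℝ => (y, x)) ⁻¹' ((fun p : ℝ × ℝ => p.1 * p.2) ⁻¹' Set.Iic t))
      = {y : ℝ | y * x ≤ t} := rfl
  rw [hset]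
  exact rhoDist_section ht hx

lemma omegaTilde_toReal (σ : Measure ℝ) [IsProbabilityMeasure σ] (hσ : σ (Set.Iio 0) = 0)
    {t : ℝ} (ht : 0 ≤ t) :
    (omegaTilde' σ (Set.Iic t)).toReal = ∫ x, ftAux t x ∂σ := by
  rw [omegaTilde_lintegral σ hσ ht,
    integral_eq_lintegral_of_nonneg_ae (Filter.Eventually.of_forall (ftAux_nonneg t))
      (measurable_ftAux t).aestronglyMeasurable]

lemma integrable_ftAux (σ : Measure ℝ) [IsProbabilityMeasure σ] (hσ : σ (Set.Iio 0) = 0)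
    (t : ℝ) : Integrable (ftAux t) σ := by
  refine Integrable.mono' (integrable_const 1) (measurable_ftAux t).aestronglyMeasurable ?_
  filter_upwards [ae_nonneg_of_Iio_zero hσ] with x hx
  rw [Real.norm_eq_abs, abs_of_nonneg (ftAux_nonneg t x)]
  exact ftAux_le_one hx


/-- `Ω̃(μ)([0,t]) = ∫ e^{-x/t} dμ(x) = exp(C_μ(-1/t))` for `t > 0`, and `Ω̃` is a
homomorphism from `(P(ℝ₊), ∗)` to `(P(ℝ₊), ∨)`. -/
theorem omegaTilde_formula_and_hom (μ ν : Measure ℝ)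
    [IsProbabilityMeasure μ] [IsProbabilityMeasure ν]
    (hμ : μ (Set.Iio 0) = 0) (hν : ν (Set.Iio 0) = 0) :
    (∀ t : ℝ, 0 < t →
      ((omegaTilde μ) (Set.Iic t)).toReal = ∫ x, Real.exp (-x / t) ∂μ ∧
      ((omegaTilde μ) (Set.Iic t)).toReal = Real.exp (Real.log (∫ u, Real.exp ((-1 / t) * u) ∂μ))) ∧
    (∀ t : ℝ, 0 ≤ t →
      ((omegaTilde (addConv μ ν)) (Set.Iic t)).toReal =
        ((omegaTilde μ) (Set.Iic t)).toReal * ((omegaTilde ν) (Set.Iic t)).toReal) := by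
  have hO : ∀ σ : Measure ℝ, omegaTilde σ = omegaTilde' σ := fun _ => rfl
  constructor
  · intro t ht
    have key := omegaTilde_toReal μ hμ ht.le
    have hfe : ∀ x : ℝ, ftAux t x = Real.exp (-x / t) := by
      intro x; unfold ftAux; rw [if_pos ht]
    have hfe' : ∀ x : ℝ, ftAux t x = Real.exp ((-1 / t) * x) := by
      intro x; rw [hfe]; congr 1; ring
    constructor
    · rw [hO, key]
      exact integral_congr_ae (Filter.Eventually.of_forall fun x => hfe x)
    · have heq : (∫ u, Real.exp ((-1 / t) * u) ∂μ) = ∫ x, ftAux t x ∂μ :=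
        integral_congr_ae (Filter.Eventually.of_forall fun x => (hfe' x).symm)
      have hint : Integrable (fun u : ℝ => Real.exp ((-1 / t) * u)) μ :=
        (integrable_ftAux μ hμ t).congr (Filter.Eventually.of_forall fun x => hfe' x)
      have hpos : 0 < ∫ u, Real.exp ((-1 / t) * u) ∂μ := integral_exp_pos hint
      rw [Real.exp_log hpos, heq, hO, key]
  · intro t ht
    haveI : IsProbabilityMeasure (addConv μ ν) := by
      rw [addConv]
      exact Measure.isProbabilityMeasure_map (measurable_fst.add measurable_snd).aemeasurable
    have hconv : addConv μ ν (Set.Iio 0) = 0 := by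
      rw [addConv, Measure.map_apply (show Measurable fun p : ℝ × ℝ => p.1 + p.2 from measurable_fst.add measurable_snd) measurableSet_Iio]
      refine measure_mono_null (t := (Set.Iio 0 ×ˢ Set.univ) ∪ (Set.univ ×ˢ Set.Iio 0)) ?_ ?_
      · rintro ⟨x, y⟩ h
        simp only [Set.mem_preimage, Set.mem_Iio] at h
        simp only [Set.mem_union, Set.mem_prod, Set.mem_Iio, Set.mem_univ, and_true, true_and]
        by_contra hc; push_neg at hc; linarith [hc.1, hc.2]
      · exact measure_union_null (by rw [Measure.prod_prod, hμ, zero_mul])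
          (by rw [Measure.prod_prod, hν, mul_zero])
    rw [hO, hO, hO, omegaTilde_toReal _ hconv ht, omegaTilde_toReal μ hμ ht,
      omegaTilde_toReal ν hν ht, addConv,
      integral_map (show Measurable fun p : ℝ × ℝ => p.1 + p.2 from measurable_fst.add measurable_snd).aemeasurable
        (measurable_ftAux t).aestronglyMeasurable]
    have h1 : ∀ᵐ p : ℝ × ℝ ∂μ.prod ν, 0 ≤ p.1 := by
      rw [MeasureTheory.ae_iff]
      have hs : {p : ℝ × ℝ | ¬0 ≤ p.1} = Set.Iio 0 ×ˢ Set.univ := by ext p; simp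
      rw [hs, Measure.prod_prod, hμ, zero_mul]
    have h2 : ∀ᵐ p : ℝ × ℝ ∂μ.prod ν, 0 ≤ p.2 := by
      rw [MeasureTheory.ae_iff]
      have hs : {p : ℝ × ℝ | ¬0 ≤ p.2} = Set.univ ×ˢ Set.Iio 0 := by ext p; simp
      rw [hs, Measure.prod_prod, hν, mul_zero]
    rw [show (∫ p : ℝ × ℝ, ftAux t (p.1 + p.2) ∂μ.prod ν)
        = ∫ p : ℝ × ℝ, ftAux t p.1 * ftAux t p.2 ∂μ.prod ν from
      integral_congr_ae (by filter_upwards [h1, h2] with p hp1 hp2; exact ftAux_mul hp1 hp2)]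
    exact integral_prod_mul (ftAux t) (ftAux t)
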